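/- Let W = W(A,T,φ) be a simple generalized Witt algebra over a field F of characteristic 0 (so A ≠ 0 and φ is nondegenerate). Then every bijective 2-local automorphism of W is a Lie algebra automorphism of W. -/

import Mathlib

/-! Generalized Witt algebras `W(A,T,φ)` over a field `F` of characteristic `0`,
following Djokovic-Zhao. Here `A` is an (additive) abelian group, `T` an
`F`-vector space, and `φ : T × A → F` is `F`-linear in the first variable and
additive in the second (encoded as `φ : T →ₗ[F] (A →+ F)`). -/

namespace GW

variable {F : Type*} [Field F]
variable {A : Type*} [AddCommGroup A]
variable {T : Type*} [AddCommGroup T] [Module F T]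
variable (φ : T →ₗ[F] (A →+ F))

/-- The bracket on finitely supported functions `A →₀ T`: the bilinear extension of
`[t^α a, t^β b] = t^(α+β) (φ a β • b - φ b α • a)`. -/
noncomputable def brk (x y : A →₀ T) : A →₀ T :=
  x.sum fun α a => y.sum fun β b => Finsupp.single (α + β) (φ a β • b - φ b α • a)

lemma brk_zero_left (y : A →₀ T) : brk φ 0 y = 0 := by
  simp [brk]

lemma brk_zero_right (x : A →₀ T) : brk φ x 0 = 0 := by
  simp [brk]

lemma brk_single_single (α β : A) (a b : T) :
    brk φ (Finsupp.single α a) (Finsupp.single β b)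
      = Finsupp.single (α + β) (φ a β • b - φ b α • a) := by
  unfold brk
  rw [Finsupp.sum_single_index, Finsupp.sum_single_index]
  · simp
  · simp

lemma brk_add_left (x x' y : A →₀ T) : brk φ (x + x') y = brk φ x y + brk φ x' y := by
  unfold brk
  rw [Finsupp.sum_add_index']
  · intro α; simp
  · intro α a a'
    rw [← Finsupp.sum_add]
    congr 1
    funext β b
    rw [← Finsupp.single_add]
    congr 1
    simp only [map_add, LinearMap.add_apply, AddMonoidHom.add_apply, add_smul, smul_add]
    abel

lemma brk_add_right (x y y' : A →₀ T) : brk φ x (y + y') = brk φ x y + brk φ x y' := by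
  unfold brk
  rw [← Finsupp.sum_add]
  congr 1
  funext α a
  rw [Finsupp.sum_add_index']
  · intro β; simp
  · intro β b b'
    rw [← Finsupp.single_add]
    congr 1
    simp only [map_add, LinearMap.add_apply, AddMonoidHom.add_apply, add_smul, smul_add]
    abel

lemma brk_neg_swap (x y : A →₀ T) : brk φ y x = - brk φ x y := by
  unfold brk
  rw [Finsupp.sum_comm]
  rw [← Finsupp.sum_neg]
  congr 1
  funext α a
  rw [← Finsupp.sum_neg]
  congr 1
  funext β b
  rw [← Finsupp.single_neg, add_comm β α]
  congr 1
  abel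

lemma brk_smul_right (c : F) (x y : A →₀ T) : brk φ x (c • y) = c • brk φ x y := by
  unfold brk
  rw [Finsupp.smul_sum]
  congr 1
  funext α a
  rw [Finsupp.sum_smul_index', Finsupp.smul_sum]
  · congr 1
    funext β b
    rw [Finsupp.smul_single]
    congr 1
    simp only [map_smul, LinearMap.smul_apply, AddMonoidHom.smul_apply, smul_sub, smul_smul,
      smul_eq_mul]
    rw [mul_comm]
  · intro β; simp

lemma brk_self [CharZero F] (x : A →₀ T) : brk φ x x = 0 := by
  have h : brk φ x x = -brk φ x x := brk_neg_swap φ x x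
  have h2 : (2 : F) • brk φ x x = 0 := by
    rw [two_smul]
    nth_rewrite 2 [h]
    simp
  calc brk φ x x = (2 : F)⁻¹ • ((2 : F) • brk φ x x) :=
        (inv_smul_smul₀ two_ne_zero _).symm
    _ = 0 := by rw [h2, smul_zero]

lemma brk_leibniz (x y z : A →₀ T) :
    brk φ x (brk φ y z) = brk φ (brk φ x y) z + brk φ y (brk φ x z) := by
  induction x using Finsupp.induction_linear with
  | zero => simp [brk_zero_left, brk_zero_right]
  | add f g hf hg =>
      simp only [brk_add_left, brk_add_right, hf, hg]; abel
  | single α a =>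
    induction y using Finsupp.induction_linear with
    | zero => simp [brk_zero_left, brk_zero_right]
    | add f g hf hg =>
        simp only [brk_add_left, brk_add_right, hf, hg]; abel
    | single β b =>
      induction z using Finsupp.induction_linear with
      | zero => simp [brk_zero_left, brk_zero_right]
      | add f g hf hg =>
          simp only [brk_add_left, brk_add_right, hf, hg]; abel
      | single γ c =>
        rw [brk_single_single, brk_single_single, brk_single_single, brk_single_single,
          brk_single_single, brk_single_single]
        rw [show β + (α + γ) = α + β + γ by abel, show α + (β + γ) = α + β + γ by abel,
          ← Finsupp.single_add]
        congr 1
        simp only [map_add, map_sub, map_smul, LinearMap.sub_apply, LinearMap.smul_apply,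
          AddMonoidHom.add_apply, AddMonoidHom.sub_apply, AddMonoidHom.smul_apply,
          smul_eq_mul, smul_sub, sub_smul, add_smul, smul_smul]
        ring_nf
        module

variable (F A T) in
/-- The carrier of the generalized Witt algebra `W(A,T,φ)`: finitely supported
functions from `A` to `T`, where `t^α ∂` corresponds to the function supported
at `α` with value `∂`. -/
@[nolint unusedArguments]
def W (_φ : T →ₗ[F] (A →+ F)) : Type _ := A →₀ T

noncomputable instance : AddCommGroup (W F A T φ) := inferInstanceAs (AddCommGroup (A →₀ T))

noncomputable instance : Module F (W F A T φ) := inferInstanceAs (Module F (A →₀ T))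

/-- The element `t^α ∂` of the generalized Witt algebra. -/
noncomputable def tt (α : A) (d : T) : W F A T φ := Finsupp.single α d

/-- The underlying finitely supported function of an element of `W(A,T,φ)`. -/
def toF (x : W F A T φ) : A →₀ T := x

/-- The Lie ring structure on the generalized Witt algebra `W(A,T,φ)`, with bracket
determined by `[t^α ∂, t^β ∂'] = t^(α+β) (φ(∂,β) • ∂' - φ(∂',α) • ∂)`. -/
noncomputable instance [CharZero F] : LieRing (W F A T φ) :=
  { (inferInstanceAs (AddCommGroup (A →₀ T)) : AddCommGroup (A →₀ T)) with
    bracket := fun x y => brk φ (toF φ x) (toF φ y)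
    add_lie := fun x y z => brk_add_left φ x y z
    lie_add := fun x y z => brk_add_right φ x y z
    lie_self := fun x => brk_self φ x
    leibniz_lie := fun x y z => brk_leibniz φ x y z }

/-- The generalized Witt algebra `W(A,T,φ)` as a Lie algebra over `F`. -/
noncomputable instance [CharZero F] : LieAlgebra F (W F A T φ) :=
  { (inferInstanceAs (Module F (A →₀ T)) : Module F (A →₀ T)) with
    lie_smul := fun c x y => brk_smul_right φ c x y }

@[simp] theorem bracket_tt [CharZero F] (α β : A) (a b : T) :
    ⁅tt φ α a, tt φ β b⁆ = tt φ (α + β) (φ a β • b - φ b α • a) :=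
  brk_single_single φ α β a b

/-- Nondegeneracy of the map `φ`. -/
def Nondeg : Prop :=
  (∀ α : A, (∀ d : T, φ d α = 0) → α = 0) ∧ (∀ d : T, (∀ α : A, φ d α = 0) → d = 0)

/-- `(A', T')` is a nondegenerate pair for `φ`. -/
def NondegPair (A' : AddSubgroup A) (T' : Submodule F T) : Prop :=
  (∀ d ∈ T', (∀ α ∈ A', φ d α = 0) → d = 0) ∧
  (∀ α ∈ A', (∀ d ∈ T', φ d α = 0) → α = 0)

/-- The subset (in fact Lie subalgebra) of `W(A,T,φ)` consisting of the finitely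
supported functions supported in `A'` with values in `T'`. -/
def supportedIn (A' : AddSubgroup A) (T' : Submodule F T) : Set (W F A T φ) :=
  {x | (∀ α : A, toF φ x α ∈ T') ∧ ∀ α : A, α ∉ A' → toF φ x α = 0}

end GW


namespace GW

variable {F : Type*} [Field F] [CharZero F]
variable {A : Type*} [AddCommGroup A]
variable {T : Type*} [AddCommGroup T] [Module F T]
variable (φ : T →ₗ[F] (A →+ F))

set_option linter.unusedSectionVars false

lemma toF_add (x y : W F A T φ) : toF φ (x + y) = toF φ x + toF φ y := rfl
lemma toF_smul (c : F) (x : W F A T φ) : toF φ (c • x) = c • toF φ x := rfl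
@[simp] lemma toF_tt (α : A) (d : T) : toF φ (tt φ α d) = Finsupp.single α d := rfl
lemma toF_inj {x y : W F A T φ} (h : toF φ x = toF φ y) : x = y := h
lemma lie_def (x y : W F A T φ) : ⁅x, y⁆ = brk φ (toF φ x) (toF φ y) := rfl
lemma toF_zero : toF φ (0 : W F A T φ) = 0 := rfl

lemma toF_sum {ι : Type*} (s : Finset ι) (w : ι → W F A T φ) :
    toF φ (∑ i ∈ s, w i) = ∑ i ∈ s, toF φ (w i) := by
  classical
  induction s using Finset.induction_on with
  | empty => rfl
  | @insert a s ha ih => rw [Finset.sum_insert ha, Finset.sum_insert ha, toF_add, ih]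

lemma tt_smul (α : A) (c : F) (v : T) : tt φ α (c • v) = c • tt φ α v := by
  apply toF_inj
  rw [toF_smul, toF_tt, toF_tt, Finsupp.smul_single]

lemma tt_sum_support (u : W F A T φ) :
    u = ∑ α ∈ (toF φ u).support, tt φ α (toF φ u α) := by
  apply toF_inj
  rw [toF_sum]
  exact (Finsupp.sum_single (toF φ u)).symm

open Classical in
lemma brk_apply (x y : A →₀ T) (p : A) :
    brk φ x y p = ∑ α ∈ x.support, ∑ β ∈ y.support,
      if α + β = p then (φ (x α) β • y β - φ (y β) α • x α) else 0 := by
  classical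
  unfold brk
  rw [Finsupp.sum_apply, Finsupp.sum]
  refine Finset.sum_congr rfl fun α _ => ?_
  rw [Finsupp.sum_apply, Finsupp.sum]
  refine Finset.sum_congr rfl fun β _ => ?_
  rw [Finsupp.single_apply]

open Classical in
lemma exists_of_brk_apply_ne (x y : A →₀ T) (p : A) (h : brk φ x y p ≠ 0) :
    ∃ α ∈ x.support, ∃ β ∈ y.support, α + β = p := by
  classical
  by_contra hc
  push_neg at hc
  apply h
  rw [brk_apply]
  refine Finset.sum_eq_zero fun α hα => Finset.sum_eq_zero fun β hβ => ?_
  rw [if_neg (hc α hα β hβ)]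

lemma brk_single_zero (d : T) (y : A →₀ T) :
    brk φ (Finsupp.single 0 d) y = y.sum fun β b => Finsupp.single β (φ d β • b) := by
  unfold brk
  rw [Finsupp.sum_single_index]
  · refine Finsupp.sum_congr fun β _ => ?_
    rw [zero_add]
    congr 1
    simp
  · simp

lemma brk_single_zero_apply (d : T) (y : A →₀ T) (p : A) :
    brk φ (Finsupp.single 0 d) y p = φ d p • y p := by
  classical
  rw [brk_single_zero, Finsupp.sum_apply, Finsupp.sum]
  by_cases hp : p ∈ y.support
  · rw [Finset.sum_eq_single_of_mem p hp]
    · simp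
    · intro β _ hne
      exact Finsupp.single_eq_of_ne' hne
  · have h0 : y p = 0 := Finsupp.notMem_support_iff.mp hp
    rw [h0, smul_zero]
    refine Finset.sum_eq_zero fun β hβ => ?_
    refine Finsupp.single_eq_of_ne ?_
    rintro rfl; exact hp hβ

lemma lie_tt_zero_apply (d : T) (y : W F A T φ) (p : A) :
    toF φ ⁅tt φ 0 d, y⁆ p = φ d p • toF φ y p :=
  brk_single_zero_apply φ d (toF φ y) p

/-- `ad x` is locally finite. -/
def LocFin (x : W F A T φ) : Prop :=
  ∀ u : W F A T φ, ∃ N : Submodule F (W F A T φ), N.FG ∧ u ∈ N ∧ ∀ y ∈ N, ⁅x, y⁆ ∈ N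

private lemma mem_of_eq {M : Type*} [AddCommGroup M] [Module F M] {S : Submodule F M}
    {a b : M} (h : a = b) (hb : b ∈ S) : a ∈ S := by rw [h]; exact hb

lemma locFin_of_suppZero {x : W F A T φ} (hx : (toF φ x).support ⊆ {0}) : LocFin φ x := by
  classical
  intro u
  refine ⟨Submodule.span F ((fun α => tt φ α (toF φ u α)) '' ((toF φ u).support : Set A)),
    Submodule.fg_span ((toF φ u).support.finite_toSet.image _), ?_, ?_⟩
  · refine mem_of_eq (tt_sum_support φ u)
      (Submodule.sum_mem _ fun α hα => Submodule.subset_span ⟨α, hα, rfl⟩)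
  · have hx' : x = tt φ 0 (toF φ x 0) := by
      apply toF_inj
      rw [toF_tt]
      exact (Finsupp.support_subset_singleton.mp hx)
    intro y hy
    induction hy using Submodule.span_induction with
    | mem y hy =>
      obtain ⟨α, _, rfl⟩ := hy
      rw [hx', bracket_tt]
      have : φ (toF φ u α) 0 = 0 := map_zero _
      rw [this, zero_add, zero_smul, sub_zero, tt_smul]
      exact Submodule.smul_mem _ _ (Submodule.subset_span ⟨α, by assumption, rfl⟩)
    | zero => rw [show ⁅x, (0 : W F A T φ)⁆ = 0 from brk_zero_right φ _]; exact Submodule.zero_mem _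
    | add a b _ _ ha hb => rw [show ⁅x, a + b⁆ = ⁅x, a⁆ + ⁅x, b⁆ from brk_add_right φ _ _ _]; exact Submodule.add_mem _ ha hb
    | smul c a _ ha => rw [show ⁅x, c • a⁆ = c • ⁅x, a⁆ from brk_smul_right φ _ _ _]; exact Submodule.smul_mem _ _ ha

lemma locFin_congr (θ : W F A T φ ≃ₗ⁅F⁆ W F A T φ) {x : W F A T φ} (hx : LocFin φ x) :
    LocFin φ (θ x) := by
  intro u
  obtain ⟨N, hFG, hmem, hinv⟩ := hx (θ.symm u)
  refine ⟨N.map θ.toLinearEquiv.toLinearMap, hFG.map _,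
    ⟨θ.symm u, hmem, θ.apply_symm_apply u⟩, ?_⟩
  rintro y ⟨n, hn, rfl⟩
  exact ⟨⁅x, n⁆, hinv n hn, LieEquiv.map_lie θ x n⟩

lemma exists_common_nonvanishing {K V : Type*} [Field K] [Infinite K] [AddCommGroup V] [Module K V]
    (s : Finset (V →ₗ[K] K)) (hs : ∀ f ∈ s, f ≠ 0) : ∃ v, ∀ f ∈ s, f v ≠ 0 := by
  classical
  induction s using Finset.induction_on with
  | empty => exact ⟨0, fun f hf => absurd hf (by simp)⟩
  | @insert f s hfs ih =>
    obtain ⟨v, hv⟩ := ih fun g hg => hs g (Finset.mem_insert_of_mem hg)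
    have hf0 : f ≠ 0 := hs f (Finset.mem_insert_self f s)
    have hex : ∃ u, f u ≠ 0 := by
      by_contra h
      push_neg at h
      exact hf0 (LinearMap.ext fun u => h u)
    obtain ⟨u, hu⟩ := hex
    obtain ⟨t, ht⟩ := Infinite.exists_notMem_finset
      ((insert f s).image fun g => -(g v) / (g u))
    refine ⟨v + t • u, fun g hg => ?_⟩
    have hgv : g (v + t • u) = g v + t * g u := by
      rw [map_add, map_smul, smul_eq_mul]
    rw [hgv]
    by_cases hgu : g u = 0
    · rw [hgu, mul_zero, add_zero]
      rcases Finset.mem_insert.mp hg with rfl | hgs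
      · exact absurd hgu hu
      · exact hv g hgs
    · intro hzero
      apply ht
      refine Finset.mem_image.mpr ⟨g, hg, ?_⟩
      rw [div_eq_iff hgu]
      linear_combination -hzero

lemma torsion_free (hφ : Nondeg φ) : ∀ (n : ℤ) (a : A), n ≠ 0 → n • a = 0 → a = 0 := by
  intro n a hn h
  refine hφ.1 a fun d => ?_
  have h1 : φ d (n • a) = 0 := by rw [h]; exact map_zero _
  rw [map_zsmul, zsmul_eq_mul] at h1
  have hn' : (n : F) ≠ 0 := Int.cast_ne_zero.mpr hn
  exact (mul_eq_zero.mp h1).resolve_left hn'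

lemma exists_L (hφ : Nondeg φ) (s : Finset A) (D : Finset A)
    (hD : ∀ δ ∈ D, δ ∈ Submodule.span ℤ (s : Set A) ∧ δ ≠ 0) :
    ∃ L : A → ℚ, (∀ a b : A, a ∈ Submodule.span ℤ (s : Set A) → b ∈ Submodule.span ℤ (s : Set A) →
        L (a + b) = L a + L b) ∧ (∀ δ ∈ D, L δ ≠ 0) := by
  classical
  letI : NoZeroSMulDivisors ℤ A :=
    ⟨fun {n a} h => by
      by_cases hn : n = 0
      · exact Or.inl hn
      · exact Or.inr (torsion_free φ hφ n a hn h)⟩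
  set G : Submodule ℤ A := Submodule.span ℤ (s : Set A) with hG
  haveI : Module.Finite ℤ ↥G := Module.Finite.iff_fg.mpr (Submodule.fg_span s.finite_toSet)
  haveI : Module.Free ℤ ↥G := Module.free_of_finite_type_torsion_free'
  set b := Module.Free.chooseBasis ℤ ↥G with hb
  set ι := Module.Free.ChooseBasisIndex ℤ ↥G with hι
  -- functionals on ι → ℚ
  have hfun : ∀ δ : {δ // δ ∈ D}, ∃ f : (ι → ℚ) →ₗ[ℚ] ℚ,
      (∀ c : ι → ℚ, f c = ∑ i, ((b.repr ⟨δ.1, (hD δ.1 δ.2).1⟩ i : ℤ) : ℚ) * c i) ∧ f ≠ 0 := by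
    intro δ
    refine ⟨∑ i, ((b.repr ⟨δ.1, (hD δ.1 δ.2).1⟩ i : ℤ) : ℚ) • LinearMap.proj i, fun c => ?_, ?_⟩
    · simp [LinearMap.sum_apply, LinearMap.smul_apply]
    · have hne : b.repr ⟨δ.1, (hD δ.1 δ.2).1⟩ ≠ 0 := by
        intro h0
        have : (⟨δ.1, (hD δ.1 δ.2).1⟩ : ↥G) = 0 := by
          have := b.repr.map_eq_zero_iff.mp h0
          exact this
        have : δ.1 = 0 := congrArg Subtype.val this
        exact (hD δ.1 δ.2).2 this
      obtain ⟨i₀, hi₀⟩ := Finsupp.ne_iff.mp hne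
      simp only [Finsupp.coe_zero, Pi.zero_apply] at hi₀
      intro h0
      have := congrArg (fun f => f (Pi.single i₀ (1:ℚ))) h0
      simp only [LinearMap.zero_apply] at this
      rw [LinearMap.sum_apply] at this
      simp only [LinearMap.smul_apply, LinearMap.proj_apply, smul_eq_mul] at this
      rw [Finset.sum_eq_single i₀ (fun i _ hne' => by simp [Pi.single_eq_of_ne hne'])
        (fun h => absurd (Finset.mem_univ i₀) h)] at this
      simp only [Pi.single_eq_same, mul_one] at this
      exact hi₀ (Int.cast_eq_zero.mp this)
  choose ff hff hff0 using hfun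
  obtain ⟨c, hc⟩ := exists_common_nonvanishing (Finset.univ.image ff)
    (by rintro f hf; obtain ⟨δ, _, rfl⟩ := Finset.mem_image.mp hf; exact hff0 δ)
  refine ⟨fun a => if h : a ∈ G then ∑ i, ((b.repr ⟨a, h⟩ i : ℤ) : ℚ) * c i else 0, ?_, ?_⟩
  · intro a a' ha ha'
    simp only []
    rw [dif_pos ha, dif_pos ha', dif_pos (add_mem ha ha')]
    have : (⟨a + a', add_mem ha ha'⟩ : ↥G) = ⟨a, ha⟩ + ⟨a', ha'⟩ := rfl
    rw [this, map_add]
    rw [← Finset.sum_add_distrib]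
    refine Finset.sum_congr rfl fun i _ => ?_
    rw [Finsupp.add_apply]
    push_cast
    ring
  · intro δ hδ
    simp only []
    rw [dif_pos (hD δ hδ).1]
    have := hc (ff ⟨δ, hδ⟩) (Finset.mem_image.mpr ⟨⟨δ, hδ⟩, Finset.mem_univ _, rfl⟩)
    rw [hff ⟨δ, hδ⟩ c] at this
    exact this



private lemma smul_ne_zero' {c : F} {t : T} (hc : c ≠ 0) (ht : t ≠ 0) : c • t ≠ 0 := by
  intro h
  apply ht
  calc t = c⁻¹ • (c • t) := (inv_smul_smul₀ hc t).symm
  _ = 0 := by rw [h, smul_zero]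

open Classical in
lemma not_locFin_core (hφ : Nondeg φ) {x : W F A T φ}
    (P : AddSubgroup A) (L : A → ℚ)
    (hLadd : ∀ a b : A, a ∈ P → b ∈ P → L (a + b) = L a + L b)
    (hsup : ∀ γ ∈ (toF φ x).support, γ ∈ P)
    (bst : A) (hbst : bst ∈ (toF φ x).support)
    (hpos : 0 < L bst)
    (hstrict : ∀ γ ∈ (toF φ x).support, γ ≠ bst → L γ < L bst)
    (aexp : A) (haP : aexp ∈ P)
    (hak : ∀ k : ℕ, φ (toF φ x bst) aexp + ((k : F) - 1) * φ (toF φ x bst) bst ≠ 0) :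
    ¬ LocFin φ x := by
  classical
  intro hLF
  set X := toF φ x with hX
  set d : T := X bst with hd
  have hd0 : d ≠ 0 := Finsupp.mem_support_iff.mp hbst
  set cc : F := φ d bst with hcc
  set ee : F := φ d aexp with hee
  have hL0 : L 0 = 0 := by
    have h := hLadd 0 0 P.zero_mem P.zero_mem
    rw [add_zero] at h; linarith
  have hLnsmul : ∀ (n : ℕ) (bb : A), bb ∈ P → L (n • bb) = n * L bb := by
    intro n bb hbb
    induction n with
    | zero => simpa [zero_nsmul] using hL0
    | succ n ih =>
      rw [succ_nsmul, hLadd _ _ (AddSubgroup.nsmul_mem P hbb n) hbb, ih]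
      push_cast; ring
  set v : ℕ → W F A T φ :=
    fun n => Nat.rec (motive := fun _ => W F A T φ) (tt φ aexp d) (fun _ ih => ⁅x, ih⁆) n with hv
  have hv0 : v 0 = tt φ aexp d := rfl
  have hvs : ∀ n, v (n+1) = ⁅x, v n⁆ := fun n => rfl
  set cst : ℕ → F := fun n => ∏ k ∈ Finset.range n, (ee + ((k : F) - 1) * cc) with hcst
  have hcst0 : ∀ n, cst n ≠ 0 := fun n =>
    Finset.prod_ne_zero_iff.mpr fun k _ => hak k
  have hbstP : bst ∈ P := hsup bst hbst
  have hPmem : ∀ n : ℕ, aexp + n • bst ∈ P := fun n =>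
    P.add_mem haP (AddSubgroup.nsmul_mem P hbstP n)
  have hLpt : ∀ n : ℕ, L (aexp + n • bst) = L aexp + n * L bst := by
    intro n
    rw [hLadd _ _ haP (AddSubgroup.nsmul_mem P hbstP n), hLnsmul n bst hbstP]
  have main : ∀ n : ℕ, (∀ γ ∈ (toF φ (v n)).support, γ ∈ P ∧ L γ ≤ L aexp + n * L bst)
      ∧ toF φ (v n) (aexp + n • bst) = cst n • d := by
    intro n
    induction n with
    | zero =>
      constructor
      · intro γ hγ
        have hγa : γ = aexp := by
          have h := Finsupp.support_single_subset (by simpa [hv0] using hγ)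
          simpa using h
        subst hγa
        exact ⟨haP, by simp⟩
      · rw [hv0, toF_tt]
        simp [zero_nsmul, hcst, Finset.prod_range_zero]
    | succ n ih =>
      obtain ⟨ihsup, ihval⟩ := ih
      have hbrk : toF φ (v (n+1)) = brk φ X (toF φ (v n)) := by rw [hvs n]; rfl
      constructor
      · intro γ hγ
        have hne : brk φ X (toF φ (v n)) γ ≠ 0 := by
          rw [← hbrk]; exact Finsupp.mem_support_iff.mp hγ
        obtain ⟨γ₁, hγ₁, γ₂, hγ₂, hsum⟩ := exists_of_brk_apply_ne φ X (toF φ (v n)) γ hne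
        subst hsum
        have hm1 := hsup γ₁ hγ₁
        have hm2 := (ihsup γ₂ hγ₂).1
        refine ⟨P.add_mem hm1 hm2, ?_⟩
        rw [hLadd _ _ hm1 hm2]
        have hb1 : L γ₁ ≤ L bst := by
          by_cases h : γ₁ = bst
          · rw [h]
          · exact le_of_lt (hstrict γ₁ hγ₁ h)
        have hb2 := (ihsup γ₂ hγ₂).2
        push_cast
        linarith
      · have hmemp : (aexp + n • bst) ∈ (toF φ (v n)).support := by
          rw [Finsupp.mem_support_iff, ihval]
          exact smul_ne_zero' (hcst0 n) hd0
        have hpeq : bst + (aexp + n • bst) = aexp + (n+1) • bst := by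
          rw [succ_nsmul]; abel
        have h1 : ∀ b ∈ X.support, b ≠ bst → (∑ β ∈ (toF φ (v n)).support,
            if b + β = aexp + (n+1) • bst then
              (φ (X b) β • toF φ (v n) β - φ (toF φ (v n) β) b • X b) else 0) = 0 := by
          intro b hb hbne
          refine Finset.sum_eq_zero fun γ₂ hγ₂ => ?_
          rw [if_neg ?_]
          intro heq
          have e1 : L (b + γ₂) = L b + L γ₂ := hLadd _ _ (hsup b hb) ((ihsup γ₂ hγ₂).1)
          have e2 := hLpt (n+1)
          rw [heq, e2] at e1
          have e3 : L b < L bst := hstrict b hb hbne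
          have e4 : L γ₂ ≤ L aexp + n * L bst := (ihsup γ₂ hγ₂).2
          push_cast at e1
          linarith
        have h2 : ∀ β ∈ (toF φ (v n)).support, β ≠ aexp + n • bst →
            (if bst + β = aexp + (n+1) • bst then
              (φ (X bst) β • toF φ (v n) β - φ (toF φ (v n) β) bst • X bst) else 0) = 0 := by
          intro β hβ hne2
          rw [if_neg ?_]
          intro heq
          apply hne2
          have h' : bst + β = bst + (aexp + n • bst) := by rw [heq, ← hpeq]
          exact add_left_cancel h'
        rw [hbrk, brk_apply, Finset.sum_eq_single_of_mem bst hbst h1,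
          Finset.sum_eq_single_of_mem _ hmemp h2, if_pos hpeq, ihval]
        rw [← hd]
        have hφ1 : φ d (aexp + n • bst) = ee + (n : F) * cc := by
          rw [map_add, AddMonoidHom.map_nsmul, nsmul_eq_mul, hee, hcc]
        have hφ2 : φ (cst n • d) bst = cst n * cc := by
          rw [map_smul, AddMonoidHom.smul_apply, smul_eq_mul, hcc]
        have hsucc : cst (n+1) = cst n * (ee + ((n:F) - 1) * cc) := Finset.prod_range_succ _ n
        rw [hφ1, hφ2, smul_smul, ← sub_smul, hsucc]
        congr 1
        ring
  -- the iterates are linearly independent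
  have hind : LinearIndependent F v := by
    rw [linearIndependent_iff']
    intro sfin
    induction sfin using Finset.induction_on_max with
    | empty => intro g _ i hi; exact absurd hi (Finset.notMem_empty i)
    | insert a sfin hlt ihs =>
      intro g hsum i hi
      have hans : a ∉ sfin := fun h => lt_irrefl a (hlt a h)
      rw [Finset.sum_insert hans] at hsum
      have hga : g a = 0 := by
        have hz := congrArg (fun w => toF φ w (aexp + a • bst)) hsum
        simp only [toF_zero, Finsupp.coe_zero, Pi.zero_apply] at hz
        rw [toF_add, toF_sum] at hz
        rw [Finsupp.add_apply, Finsupp.finset_sum_apply] at hz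
        have hz2 : ∀ i ∈ sfin, toF φ (g i • v i) (aexp + a • bst) = 0 := by
          intro i hi'
          rw [toF_smul, Finsupp.smul_apply]
          have hvz : toF φ (v i) (aexp + a • bst) = 0 := by
            by_contra hcon
            have hmem := Finsupp.mem_support_iff.mpr hcon
            have hle := ((main i).1 _ hmem).2
            rw [hLpt a] at hle
            have hia : (i : ℚ) < (a : ℚ) := by exact_mod_cast hlt i hi'
            nlinarith
          rw [hvz, smul_zero]
        rw [Finset.sum_eq_zero hz2, add_zero, toF_smul, Finsupp.smul_apply, (main a).2,
          smul_smul] at hz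
        have hmul : g a * cst a = 0 := by
          by_contra hcon
          exact smul_ne_zero' hcon hd0 hz
        exact (mul_eq_zero.mp hmul).resolve_right (hcst0 a)
      rcases Finset.mem_insert.mp hi with rfl | his
      · exact hga
      · rw [hga, zero_smul, zero_add] at hsum
        exact ihs g hsum i his
  -- contradiction with a finite-dimensional invariant submodule
  obtain ⟨N, hFG, hu₀, hinvN⟩ := hLF (tt φ aexp d)
  have hvN : ∀ n, v n ∈ N := by
    intro n
    induction n with
    | zero => exact hu₀
    | succ n ih => rw [hvs]; exact hinvN _ ih
  haveI : Module.Finite F ↥N := Module.Finite.iff_fg.mpr hFG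
  set m := Module.finrank F ↥N with hm
  have h1 : LinearIndependent F (fun i : Fin (m+1) => v (i : ℕ)) :=
    hind.comp _ Fin.val_injective
  have hvv : LinearIndependent F (fun i : Fin (m+1) => (⟨v (i : ℕ), hvN i⟩ : ↥N)) :=
    LinearIndependent.of_comp N.subtype h1
  have hcard := hvv.fintype_card_le_finrank
  rw [Fintype.card_fin] at hcard
  omega


open Classical in
lemma not_locFin (hφ : Nondeg φ) {x : W F A T φ} {β₁ : A}
    (hβ₁ : β₁ ∈ (toF φ x).support) (hβ₁0 : β₁ ≠ 0) : ¬ LocFin φ x := by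
  classical
  set X := toF φ x with hX
  have key : ∀ γ : A, γ ∈ X.support →
      ∃ a : A, ∀ k : ℕ, φ (X γ) a + ((k : F) - 1) * φ (X γ) γ ≠ 0 := by
    intro γ hγ
    have hXγ : X γ ≠ 0 := Finsupp.mem_support_iff.mp hγ
    have hex : ∃ a₀, φ (X γ) a₀ ≠ 0 := by
      by_contra h; push_neg at h; exact hXγ (hφ.2 _ h)
    obtain ⟨a₀, ha₀⟩ := hex
    set c := φ (X γ) γ with hc'
    by_cases hc : c = 0
    · exact ⟨a₀, fun k => by rw [hc, mul_zero, add_zero]; exact ha₀⟩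
    · by_cases hm : ∃ m : ℤ, φ (X γ) a₀ + (m : F) * c = 0
      · obtain ⟨m₀, hm₀⟩ := hm
        refine ⟨a₀ + (m₀ + 2) • γ, fun k => ?_⟩
        rw [map_add, AddMonoidHom.map_zsmul, zsmul_eq_mul]
        intro h0
        have hkc : ((k : F) + 1) * c = 0 := by
          push_cast at h0 hm₀ ⊢
          linear_combination h0 - hm₀
        have hk1 : ((k : F) + 1) ≠ 0 := by
          have := Nat.cast_add_one_ne_zero (R := F) k
          exact_mod_cast this
        exact hc ((mul_eq_zero.mp hkc).resolve_left hk1)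
      · push_neg at hm
        refine ⟨a₀, fun k => ?_⟩
        intro h0
        apply hm ((k : ℤ) - 1)
        push_cast
        linear_combination h0
  choose aof haof using key
  set a' : A → A := fun γ => if h : γ ∈ X.support then aof γ h else 0 with ha'
  set s : Finset A := X.support ∪ X.support.image a' with hs
  set D : Finset A := ((X.support ×ˢ X.support).filter fun p => p.1 ≠ p.2).image
      (fun p => p.1 - p.2) ∪ X.support.filter (· ≠ 0) with hD
  have hmemG : ∀ γ ∈ X.support, γ ∈ Submodule.span ℤ (s : Set A) := fun γ hγ =>
    Submodule.subset_span (by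
      simp only [hs, Finset.coe_union, Set.mem_union, Finset.mem_coe]
      exact Or.inl hγ)
  have hDok : ∀ δ ∈ D, δ ∈ Submodule.span ℤ (s : Set A) ∧ δ ≠ 0 := by
    intro δ hδ
    rcases Finset.mem_union.mp hδ with h | h
    · obtain ⟨p, hp, rfl⟩ := Finset.mem_image.mp h
      obtain ⟨hp12, hpne⟩ := Finset.mem_filter.mp hp
      obtain ⟨h1, h2⟩ := Finset.mem_product.mp hp12
      exact ⟨sub_mem (hmemG _ h1) (hmemG _ h2), sub_ne_zero_of_ne hpne⟩
    · obtain ⟨h1, h2⟩ := Finset.mem_filter.mp h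
      exact ⟨hmemG _ h1, h2⟩
  obtain ⟨L, hLadd, hLD⟩ := exists_L φ hφ s D hDok
  set P := (Submodule.span ℤ (s : Set A)).toAddSubgroup with hP
  have hPiff : ∀ a : A, a ∈ P ↔ a ∈ Submodule.span ℤ (s : Set A) := fun a => Iff.rfl
  have hstrictify : ∀ L' : A → ℚ, (∀ δ ∈ D, L' δ ≠ 0) →
      (∀ a b : A, a ∈ Submodule.span ℤ (s : Set A) → b ∈ Submodule.span ℤ (s : Set A) →
        L' (a + b) = L' a + L' b) →
      ∀ β₀ ∈ X.support, (∀ γ ∈ X.support, L' γ ≤ L' β₀) → 0 < L' β₀ → ¬ LocFin φ x := by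
    intro L' hD' hadd' β₀ hβ₀ hmax hpos
    have hstrict : ∀ γ ∈ X.support, γ ≠ β₀ → L' γ < L' β₀ := by
      intro γ hγ hne
      rcases lt_or_eq_of_le (hmax γ hγ) with h | h
      · exact h
      · exfalso
        have hδ : γ - β₀ ∈ D := Finset.mem_union_left _ (Finset.mem_image.mpr
          ⟨(γ, β₀), Finset.mem_filter.mpr ⟨Finset.mem_product.mpr ⟨hγ, hβ₀⟩, hne⟩, rfl⟩)
        have hz : L' (γ - β₀) = 0 := by
          have h2 := hadd' (γ - β₀) β₀ (sub_mem (hmemG _ hγ) (hmemG _ hβ₀)) (hmemG _ hβ₀)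
          rw [sub_add_cancel] at h2
          linarith
        exact hD' _ hδ hz
    have haP : a' β₀ ∈ Submodule.span ℤ (s : Set A) :=
      Submodule.subset_span (by
        simp only [hs, Finset.coe_union, Set.mem_union, Finset.mem_coe]
        exact Or.inr (Finset.mem_image.mpr ⟨β₀, hβ₀, rfl⟩))
    have hak : ∀ k : ℕ, φ (toF φ x β₀) (a' β₀) + ((k : F) - 1) * φ (toF φ x β₀) β₀ ≠ 0 := by
      intro k
      have : a' β₀ = aof β₀ hβ₀ := by rw [ha']; exact dif_pos hβ₀
      rw [this]
      exact haof β₀ hβ₀ k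
    exact not_locFin_core φ hφ P L'
      (fun a b ha hb => hadd' a b ((hPiff a).mp ha) ((hPiff b).mp hb))
      (fun γ hγ => (hPiff γ).mpr (hmemG γ hγ)) β₀ hβ₀ hpos hstrict (a' β₀)
      ((hPiff _).mpr haP) hak
  obtain ⟨β₀, hβ₀, hmax₀⟩ := X.support.exists_max_image L ⟨β₁, hβ₁⟩
  by_cases hpos : 0 < L β₀
  · exact hstrictify L hLD hLadd β₀ hβ₀ (fun γ hγ => hmax₀ γ hγ) hpos
  · obtain ⟨β₀', hβ₀', hmax'⟩ := X.support.exists_max_image (fun γ => -L γ) ⟨β₁, hβ₁⟩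
    refine hstrictify (fun γ => -L γ) (fun δ hδ => neg_ne_zero.mpr (hLD δ hδ))
      (fun a b ha hb => by rw [hLadd a b ha hb]; ring) β₀' hβ₀'
      (fun γ hγ => hmax' γ hγ) ?_
    have hL1 : L β₁ ≠ 0 := hLD β₁ (Finset.mem_union_right _
      (Finset.mem_filter.mpr ⟨hβ₁, hβ₁0⟩))
    have h2 : L β₁ ≤ L β₀ := hmax₀ β₁ hβ₁
    have h3 : -L β₁ ≤ -L β₀' := hmax' β₁ hβ₁
    have h4 : L β₁ < 0 := lt_of_le_of_ne (le_trans h2 (not_lt.mp hpos)) hL1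
    linarith

lemma suppZero_of_locFin (hφ : Nondeg φ) {x : W F A T φ} (h : LocFin φ x) :
    (toF φ x).support ⊆ {0} := by
  intro β hβ
  rw [Finset.mem_singleton]
  by_contra hβ0
  exact not_locFin φ hφ hβ hβ0 h


lemma exists_T_ne_zero (hφ : Nondeg φ) (hA : Nontrivial A) : ∃ e : T, e ≠ 0 := by
  obtain ⟨α, hα⟩ := exists_ne (0 : A)
  by_contra h
  push_neg at h
  apply hα
  exact hφ.1 α fun d => by rw [h d]; simp

lemma lieEquiv_map_zero (θ : W F A T φ ≃ₗ⁅F⁆ W F A T φ) : θ (0 : W F A T φ) = 0 :=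
  θ.toLinearEquiv.map_zero

lemma lieEquiv_map_add (θ : W F A T φ ≃ₗ⁅F⁆ W F A T φ) (a b : W F A T φ) :
    θ (a + b) = θ a + θ b :=
  θ.toLinearEquiv.map_add a b

lemma lieEquiv_map_smul (θ : W F A T φ ≃ₗ⁅F⁆ W F A T φ) (c : F) (a : W F A T φ) :
    θ (c • a) = c • θ a :=
  θ.toLinearEquiv.map_smul c a

lemma lieEquiv_map_sum {ι : Type*} (θ : W F A T φ ≃ₗ⁅F⁆ W F A T φ) (s : Finset ι)
    (f : ι → W F A T φ) : θ (∑ i ∈ s, f i) = ∑ i ∈ s, θ (f i) :=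
  by
    classical
    induction s using Finset.induction_on with
    | empty => rw [Finset.sum_empty, Finset.sum_empty]; exact lieEquiv_map_zero φ θ
    | @insert a s ha ih => rw [Finset.sum_insert ha, Finset.sum_insert ha, lieEquiv_map_add, ih]

/-- The action induced by an automorphism on the degree-zero part. -/
noncomputable def tauMap (θ : W F A T φ ≃ₗ⁅F⁆ W F A T φ) : T → T :=
  fun d => toF φ (θ (tt φ 0 d)) 0

lemma theta_tt_zero (hφ : Nondeg φ) (θ : W F A T φ ≃ₗ⁅F⁆ W F A T φ) (d : T) :
    θ (tt φ 0 d) = tt φ 0 (tauMap φ θ d) := by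
  have h1 : LocFin φ (tt φ 0 d) := locFin_of_suppZero φ (by
    rw [toF_tt]; exact Finsupp.support_single_subset)
  have h2 := suppZero_of_locFin φ hφ (locFin_congr φ θ h1)
  apply toF_inj
  rw [toF_tt]
  exact Finsupp.support_subset_singleton.mp h2

lemma tau_tau (hφ : Nondeg φ) (θ : W F A T φ ≃ₗ⁅F⁆ W F A T φ) (d : T) :
    tauMap φ θ.symm (tauMap φ θ d) = d := by
  have h1 : θ.symm (θ (tt φ 0 d)) = tt φ 0 d := θ.symm_apply_apply _
  rw [theta_tt_zero φ hφ θ d, theta_tt_zero φ hφ θ.symm _] at h1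
  have h2 := congrArg (fun z => toF φ z 0) h1
  simpa using h2

lemma theta_tt_support (hφ : Nondeg φ) (θ : W F A T φ ≃ₗ⁅F⁆ W F A T φ) {α : A} {v : T} {γ : A}
    (hγ : γ ∈ (toF φ (θ (tt φ α v))).support) :
    ∀ d : T, φ d γ = φ (tauMap φ θ.symm d) α := by
  intro d
  have hY : toF φ (θ (tt φ α v)) γ ≠ 0 := Finsupp.mem_support_iff.mp hγ
  have h1 : ⁅tt φ 0 d, θ (tt φ α v)⁆ = φ (tauMap φ θ.symm d) α • θ (tt φ α v) := by
    have e1 : θ (θ.symm (tt φ 0 d)) = tt φ 0 d := θ.apply_symm_apply _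
    calc ⁅tt φ 0 d, θ (tt φ α v)⁆ = θ ⁅θ.symm (tt φ 0 d), tt φ α v⁆ := by
          rw [LieEquiv.map_lie, e1]
      _ = θ ⁅tt φ 0 (tauMap φ θ.symm d), tt φ α v⁆ := by rw [theta_tt_zero φ hφ θ.symm d]
      _ = θ (φ (tauMap φ θ.symm d) α • tt φ α v) := by
          rw [bracket_tt, zero_add, map_zero (φ v), zero_smul, sub_zero, tt_smul]
      _ = φ (tauMap φ θ.symm d) α • θ (tt φ α v) := lieEquiv_map_smul φ θ _ _
  have h2 := congrArg (fun z => toF φ z γ) h1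
  rw [lie_tt_zero_apply, toF_smul, Finsupp.smul_apply] at h2
  by_contra hne
  exact absurd h2 (fun h3 => absurd (by rw [sub_smul, h3, sub_self] :
    (φ d γ - φ (tauMap φ θ.symm d) α) • toF φ (θ (tt φ α v)) γ = 0)
    (smul_ne_zero' (sub_ne_zero_of_ne hne) hY))

lemma exists_sigma (hφ : Nondeg φ) (hA : Nontrivial A) (θ : W F A T φ ≃ₗ⁅F⁆ W F A T φ)
    (α : A) : ∃ γ : A, ∀ d : T, φ d γ = φ (tauMap φ θ.symm d) α := by
  obtain ⟨e₀, he₀⟩ := exists_T_ne_zero φ hφ hA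
  have hne : toF φ (θ (tt φ α e₀)) ≠ 0 := by
    intro h
    have h0 : θ (tt φ α e₀) = 0 := h
    have h1 : tt φ α e₀ = (0 : W F A T φ) := by
      apply EquivLike.injective θ
      rw [h0, lieEquiv_map_zero]
    exact he₀ (Finsupp.single_eq_zero.mp h1)
  obtain ⟨γ, hγ⟩ := Finsupp.support_nonempty_iff.mpr hne
  exact ⟨γ, theta_tt_support φ hφ θ hγ⟩

/-- The degree map induced by an automorphism. -/
noncomputable def sigMap (hφ : Nondeg φ) (hA : Nontrivial A)
    (θ : W F A T φ ≃ₗ⁅F⁆ W F A T φ) : A → A :=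
  fun α => (exists_sigma φ hφ hA θ α).choose

lemma sigMap_spec (hφ : Nondeg φ) (hA : Nontrivial A) (θ : W F A T φ ≃ₗ⁅F⁆ W F A T φ)
    (α : A) : ∀ d : T, φ d (sigMap φ hφ hA θ α) = φ (tauMap φ θ.symm d) α :=
  (exists_sigma φ hφ hA θ α).choose_spec

lemma sigMap_unique (hφ : Nondeg φ) (hA : Nontrivial A) (θ : W F A T φ ≃ₗ⁅F⁆ W F A T φ)
    {α γ : A} (hγ : ∀ d : T, φ d γ = φ (tauMap φ θ.symm d) α) :
    γ = sigMap φ hφ hA θ α := by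
  have h : ∀ d : T, φ d (γ - sigMap φ hφ hA θ α) = 0 := fun d => by
    rw [map_sub (φ d), hγ d, sigMap_spec φ hφ hA θ α d, sub_self]
  exact sub_eq_zero.mp (hφ.1 _ h)

/-- The maps induced by an automorphism on each graded component. -/
noncomputable def muMap (hφ : Nondeg φ) (hA : Nontrivial A)
    (θ : W F A T φ ≃ₗ⁅F⁆ W F A T φ) (α : A) (v : T) : T :=
  toF φ (θ (tt φ α v)) (sigMap φ hφ hA θ α)

lemma theta_tt_eq (hφ : Nondeg φ) (hA : Nontrivial A) (θ : W F A T φ ≃ₗ⁅F⁆ W F A T φ)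
    (α : A) (v : T) :
    θ (tt φ α v) = tt φ (sigMap φ hφ hA θ α) (muMap φ hφ hA θ α v) := by
  by_cases hv : v = 0
  · subst hv
    have h1 : tt φ α (0:T) = (0 : W F A T φ) := by
      apply toF_inj; rw [toF_tt, Finsupp.single_zero]; rfl
    rw [h1, lieEquiv_map_zero]
    apply toF_inj
    rw [toF_tt]
    have : muMap φ hφ hA θ α 0 = 0 := by
      unfold muMap
      rw [h1, lieEquiv_map_zero]
      rfl
    rw [this, Finsupp.single_zero]
    rfl
  · have hsub : (toF φ (θ (tt φ α v))).support ⊆ {sigMap φ hφ hA θ α} := by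
      intro γ hγ
      rw [Finset.mem_singleton]
      exact sigMap_unique φ hφ hA θ (theta_tt_support φ hφ θ hγ)
    apply toF_inj
    rw [toF_tt]
    exact Finsupp.support_subset_singleton.mp hsub

lemma muMap_ne_zero (hφ : Nondeg φ) (hA : Nontrivial A) (θ : W F A T φ ≃ₗ⁅F⁆ W F A T φ)
    {α : A} {v : T} (hv : v ≠ 0) : muMap φ hφ hA θ α v ≠ 0 := by
  intro h0
  have h1 := theta_tt_eq φ hφ hA θ α v
  rw [h0] at h1
  have h2 : tt φ (sigMap φ hφ hA θ α) (0:T) = (0 : W F A T φ) := by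
    apply toF_inj; rw [toF_tt, Finsupp.single_zero]; rfl
  rw [h2] at h1
  have h3 : tt φ α v = (0 : W F A T φ) := by
    apply EquivLike.injective θ
    rw [h1, lieEquiv_map_zero]
  exact hv (Finsupp.single_eq_zero.mp h3)

lemma sigMap_zero (hφ : Nondeg φ) (hA : Nontrivial A) (θ : W F A T φ ≃ₗ⁅F⁆ W F A T φ) :
    sigMap φ hφ hA θ 0 = 0 :=
  (sigMap_unique φ hφ hA θ (fun d => by simp)).symm

lemma sigMap_inj (hφ : Nondeg φ) (hA : Nontrivial A) (θ : W F A T φ ≃ₗ⁅F⁆ W F A T φ)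
    {α α' : A} (h : sigMap φ hφ hA θ α = sigMap φ hφ hA θ α') : α = α' := by
  have hsurj : ∀ d'' : T, ∃ d : T, tauMap φ θ.symm d = d'' := fun d'' =>
    ⟨tauMap φ θ d'', tau_tau φ hφ θ d''⟩
  have hall : ∀ d'' : T, φ d'' α = φ d'' α' := by
    intro d''
    obtain ⟨d, rfl⟩ := hsurj d''
    rw [← sigMap_spec φ hφ hA θ α d, ← sigMap_spec φ hφ hA θ α' d, h]
  have h2 := hφ.1 (α - α') fun d => by rw [map_sub (φ d), hall d, sub_self]
  exact sub_eq_zero.mp h2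


lemma exists_gadget (hφ : Nondeg φ) {v : T} (hv : v ≠ 0) (α : A) (E : Finset A) :
    ∃ γ : A, γ ∉ E ∧ α - γ ∉ E ∧ γ ≠ 0 ∧ α - γ ≠ 0 ∧ φ v (α - γ - γ) ≠ 0 := by
  classical
  have hex : ∃ γ₀, φ v γ₀ ≠ 0 := by
    by_contra h; push_neg at h; exact hv (hφ.2 v h)
  obtain ⟨γ₀, hγ₀⟩ := hex
  set c := φ v γ₀ with hc
  have hφn : ∀ n : ℕ, φ v (n • γ₀) = n * c := fun n => by
    rw [AddMonoidHom.map_nsmul, nsmul_eq_mul]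
  have hinj : ∀ m n : ℕ, m • γ₀ = n • γ₀ → m = n := by
    intro m n h
    have h2 := congrArg (φ v) h
    rw [hφn, hφn] at h2
    exact_mod_cast mul_right_cancel₀ hγ₀ h2
  have fin1 : {n : ℕ | n • γ₀ ∈ (E : Set A)}.Finite := by
    refine Set.Finite.preimage ?_ E.finite_toSet
    intro m _ n _ h
    exact hinj m n h
  have fin2 : {n : ℕ | α - n • γ₀ ∈ (E : Set A)}.Finite := by
    refine Set.Finite.preimage ?_ E.finite_toSet
    intro m _ n _ h
    exact hinj m n (sub_right_inj.mp h)
  have fin3 : {n : ℕ | φ v (α - n • γ₀ - n • γ₀) = 0}.Finite := by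
    refine Set.Subsingleton.finite ?_
    intro m hm n hn
    simp only [Set.mem_setOf_eq, map_sub, hφn] at hm hn
    have h2 : (m : F) * c = (n : F) * c := by linear_combination (hn - hm) / 2
    exact_mod_cast mul_right_cancel₀ hγ₀ h2
  have fin4 : {n : ℕ | n • γ₀ = 0}.Finite := by
    refine Set.Finite.subset (Set.finite_singleton 0) ?_
    intro n hn
    have h2 : (n : F) * c = 0 := by rw [← hφn n, hn]; simp
    have h3 : (n : F) = 0 := (mul_eq_zero.mp h2).resolve_right hγ₀
    simpa using Nat.cast_eq_zero.mp h3
  have fin5 : {n : ℕ | α - n • γ₀ = 0}.Finite := by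
    refine Set.Subsingleton.finite ?_
    intro m hm n hn
    simp only [Set.mem_setOf_eq, sub_eq_zero] at hm hn
    exact hinj m n (hm.symm.trans hn)
  obtain ⟨n, hn⟩ := ((((fin1.union fin2).union fin3).union fin4).union fin5).infinite_compl.nonempty
  simp only [Set.mem_compl_iff, Set.mem_union, Set.mem_setOf_eq, not_or] at hn
  obtain ⟨⟨⟨⟨hn1, hn2⟩, hn3⟩, hn4⟩, hn5⟩ := hn
  exact ⟨n • γ₀, fun h => hn1 h, fun h => hn2 h, hn4, hn5, hn3⟩

lemma builder_aux (hφ : Nondeg φ) (Q : Finset (A × T)) (hQ : ∀ p ∈ Q, p.2 ≠ 0) :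
    ∀ (B₀ : Finset A) (d₀ : A → T), 0 ∉ B₀ → (∀ β ∈ B₀, d₀ β ≠ 0) →
    ∃ (B : Finset A) (d : A → T), B₀ ⊆ B ∧ 0 ∉ B ∧ (∀ β ∈ B, d β ≠ 0) ∧
      (∀ β ∈ B₀, d β = d₀ β) ∧
      ∀ p ∈ Q, ∃ γ, γ ∈ B ∧ p.1 - γ ∈ B ∧ d γ = p.2 ∧ d (p.1 - γ) = p.2 ∧
        φ p.2 (p.1 - γ - γ) ≠ 0 := by
  classical
  induction Q using Finset.induction_on with
  | empty =>
    intro B₀ d₀ h0 hd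
    exact ⟨B₀, d₀, subset_rfl, h0, hd, fun _ _ => rfl, by simp⟩
  | @insert p Q hpQ ih =>
    intro B₀ d₀ h0 hd
    have hp2 : p.2 ≠ 0 := hQ p (Finset.mem_insert_self p Q)
    obtain ⟨γ, hγE, hγ'E, hγ0, hγ'0, hφγ⟩ := exists_gadget φ hφ hp2 p.1 B₀
    set B₁ : Finset A := insert γ (insert (p.1 - γ) B₀) with hB₁
    set d₁ : A → T := Function.update (Function.update d₀ γ p.2) (p.1 - γ) p.2 with hd₁
    have hd₁γ : d₁ γ = p.2 := by
      rw [hd₁, Function.update_apply]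
      split_ifs with h
      · rfl
      · rw [Function.update_self]
    have hd₁γ' : d₁ (p.1 - γ) = p.2 := by rw [hd₁, Function.update_self]
    have hd₁B₀ : ∀ β ∈ B₀, d₁ β = d₀ β := by
      intro β hβ
      have h1 : β ≠ p.1 - γ := fun h => hγ'E (h ▸ hβ)
      have h2 : β ≠ γ := fun h => hγE (h ▸ hβ)
      rw [hd₁, Function.update_of_ne h1, Function.update_of_ne h2]
    have hB₁0 : 0 ∉ B₁ := by
      rw [hB₁]
      simp only [Finset.mem_insert]
      push_neg
      exact ⟨fun h => hγ0 h.symm, fun h => hγ'0 h.symm, h0⟩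
    have hd₁ne : ∀ β ∈ B₁, d₁ β ≠ 0 := by
      intro β hβ
      rcases Finset.mem_insert.mp hβ with rfl | hβ'
      · rw [hd₁γ]; exact hp2
      · rcases Finset.mem_insert.mp hβ' with rfl | hβ''
        · rw [hd₁γ']; exact hp2
        · rw [hd₁B₀ β hβ'']; exact hd β hβ''
    obtain ⟨B, d, hBsub, hB0, hdne, hdagree, hgad⟩ :=
      ih (fun q hq => hQ q (Finset.mem_insert_of_mem hq)) B₁ d₁ hB₁0 hd₁ne
    have hγB : γ ∈ B := hBsub (by rw [hB₁]; exact Finset.mem_insert_self _ _)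
    have hγ'B : p.1 - γ ∈ B := hBsub (by
      rw [hB₁]; exact Finset.mem_insert_of_mem (Finset.mem_insert_self _ _))
    refine ⟨B, d, ?_, hB0, hdne, ?_, ?_⟩
    · exact fun β hβ => hBsub (by
        rw [hB₁]; exact Finset.mem_insert_of_mem (Finset.mem_insert_of_mem hβ))
    · intro β hβ
      rw [hdagree β (by
        rw [hB₁]; exact Finset.mem_insert_of_mem (Finset.mem_insert_of_mem hβ))]
      exact hd₁B₀ β hβ
    · intro q hq
      rcases Finset.mem_insert.mp hq with rfl | hq'
      · refine ⟨γ, hγB, hγ'B, ?_, ?_, hφγ⟩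
        · rw [hdagree γ (by rw [hB₁]; exact Finset.mem_insert_self _ _), hd₁γ]
        · rw [hdagree _ (by
            rw [hB₁]; exact Finset.mem_insert_of_mem (Finset.mem_insert_self _ _)), hd₁γ']
      · exact hgad q hq'

open Classical in
lemma builder (hφ : Nondeg φ) (S : Finset A) (V : Finset T) (hV : ∀ v ∈ V, v ≠ 0)
    (e₀ : T) (he₀ : e₀ ≠ 0) :
    ∃ (B : Finset A) (d : A → T), 0 ∉ B ∧ S.erase 0 ⊆ B ∧ (∀ β ∈ B, d β ≠ 0) ∧
      ∀ α ∈ S, ∀ v ∈ V, ∃ γ, γ ∈ B ∧ α - γ ∈ B ∧ d γ = v ∧ d (α - γ) = v ∧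
        φ v (α - γ - γ) ≠ 0 := by
  classical
  obtain ⟨B, d, hsub, hB0, hdne, _, hgad⟩ := builder_aux φ hφ (S ×ˢ V)
    (fun p hp => hV p.2 (Finset.mem_product.mp hp).2) (S.erase 0) (fun _ => e₀)
    (fun h => absurd (Finset.mem_erase.mp h).1 (by simp)) (fun _ _ => he₀)
  refine ⟨B, d, hB0, hsub, hdne, ?_⟩
  intro α hα v hv
  exact hgad (α, v) (Finset.mem_product.mpr ⟨hα, hv⟩)


/-- Evaluation functional `t ↦ φ t δ`. -/
noncomputable def evφ (δ : A) : T →ₗ[F] F where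
  toFun t := φ t δ
  map_add' a b := by simp
  map_smul' c a := by simp

open Classical in
lemma rigidity (hφ : Nondeg φ) (hA : Nontrivial A) (x y z : W F A T φ) :
    ∃ w : W F A T φ, ∀ θ : W F A T φ ≃ₗ⁅F⁆ W F A T φ,
      θ w = w → θ x = x ∧ θ y = y ∧ θ z = z := by
  classical
  obtain ⟨e₀, he₀⟩ := exists_T_ne_zero φ hφ hA
  set S : Finset A := (toF φ x).support ∪ (toF φ y).support ∪ (toF φ z).support with hS
  set V : Finset T := ((toF φ x).support.image (toF φ x) ∪ (toF φ y).support.image (toF φ y))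
      ∪ (toF φ z).support.image (toF φ z) with hV
  have hVne : ∀ v ∈ V, v ≠ 0 := by
    intro v hv
    rcases Finset.mem_union.mp hv with hv1 | hv3
    · rcases Finset.mem_union.mp hv1 with hv1 | hv2
      · obtain ⟨α, hα, rfl⟩ := Finset.mem_image.mp hv1
        exact Finsupp.mem_support_iff.mp hα
      · obtain ⟨α, hα, rfl⟩ := Finset.mem_image.mp hv2
        exact Finsupp.mem_support_iff.mp hα
    · obtain ⟨α, hα, rfl⟩ := Finset.mem_image.mp hv3
      exact Finsupp.mem_support_iff.mp hα
  obtain ⟨B, d, hB0, hSB, hdne, hgad⟩ := builder φ hφ S V hVne e₀ he₀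
  set D : Finset A := ((insert 0 B ×ˢ insert 0 B).filter fun p => p.1 ≠ p.2).image
      (fun p => p.1 - p.2) with hDdef
  have hDfun : ∀ f ∈ D.image (evφ φ), f ≠ 0 := by
    intro f hf
    obtain ⟨δ, hδ, rfl⟩ := Finset.mem_image.mp hf
    obtain ⟨q, hq, rfl⟩ := Finset.mem_image.mp hδ
    have hne : q.1 - q.2 ≠ 0 := sub_ne_zero_of_ne (Finset.mem_filter.mp hq).2
    intro h0
    apply hne
    refine hφ.1 _ fun t => ?_
    exact DFunLike.congr_fun h0 t
  obtain ⟨p₀, hp₀'⟩ := exists_common_nonvanishing (D.image (evφ φ)) hDfun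
  have hp₀ : ∀ δ ∈ D, φ p₀ δ ≠ 0 := fun δ hδ => hp₀' _ (Finset.mem_image_of_mem _ hδ)
  set w : W F A T φ := tt φ 0 p₀ + ∑ β ∈ B, tt φ β (d β) with hw
  have hwev : ∀ q : A, toF φ w q = if q = 0 then p₀ else if q ∈ B then d q else 0 := by
    intro q
    rw [hw, toF_add, toF_sum, Finsupp.add_apply, Finsupp.finset_sum_apply]
    simp only [toF_tt]
    rw [Finsupp.single_apply]
    have h1 : ∀ β ∈ B, Finsupp.single β (d β) q = if β = q then d β else 0 :=
      fun β _ => Finsupp.single_apply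
    rw [Finset.sum_congr rfl h1, Finset.sum_ite_eq' B q d]
    by_cases hq0 : q = 0
    · subst hq0
      rw [if_pos rfl, if_pos rfl, if_neg hB0, add_zero]
    · rw [if_neg (fun h => hq0 h.symm), if_neg hq0, zero_add]
  refine ⟨w, fun θ hθw => ?_⟩
  have h1 : θ w = tt φ 0 (tauMap φ θ p₀) +
      ∑ β ∈ B, tt φ (sigMap φ hφ hA θ β) (muMap φ hφ hA θ β (d β)) := by
    rw [hw, lieEquiv_map_add, lieEquiv_map_sum, theta_tt_zero φ hφ θ p₀]
    congr 1
    exact Finset.sum_congr rfl fun β _ => theta_tt_eq φ hφ hA θ β (d β)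
  have hθw2 : tt φ 0 (tauMap φ θ p₀) +
      ∑ β ∈ B, tt φ (sigMap φ hφ hA θ β) (muMap φ hφ hA θ β (d β)) = w := by
    rw [← h1, hθw]
  have hσ0ne : ∀ β ∈ B, sigMap φ hφ hA θ β ≠ 0 := by
    intro β hβ h
    rw [← sigMap_zero φ hφ hA θ] at h
    exact hB0 ((sigMap_inj φ hφ hA θ h) ▸ hβ)
  have hτp₀ : tauMap φ θ p₀ = p₀ := by
    have h := congrArg (fun u => toF φ u 0) hθw2
    rw [toF_add, toF_sum, Finsupp.add_apply, Finsupp.finset_sum_apply] at h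
    simp only [toF_tt] at h
    rw [Finsupp.single_eq_same,
      Finset.sum_eq_zero (fun β hβ => Finsupp.single_eq_of_ne' (hσ0ne β hβ)), add_zero] at h
    rw [hwev 0, if_pos rfl] at h
    exact h
  have hτ'p₀ : tauMap φ θ.symm p₀ = p₀ := by
    nth_rewrite 1 [← hτp₀]
    exact tau_tau φ hφ θ p₀
  have hφσ : ∀ β : A, φ p₀ (sigMap φ hφ hA θ β) = φ p₀ β := by
    intro β
    have h := sigMap_spec φ hφ hA θ β p₀
    rw [hτ'p₀] at h
    exact h
  have hμd : ∀ β ∈ B, muMap φ hφ hA θ β (d β) ≠ 0 :=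
    fun β hβ => muMap_ne_zero φ hφ hA θ (hdne β hβ)
  have hσB : ∀ β ∈ B, sigMap φ hφ hA θ β = β := by
    intro β hβ
    have h := congrArg (fun u => toF φ u (sigMap φ hφ hA θ β)) hθw2
    rw [toF_add, toF_sum, Finsupp.add_apply, Finsupp.finset_sum_apply] at h
    simp only [toF_tt] at h
    rw [Finsupp.single_eq_of_ne' (fun h0 => hσ0ne β hβ h0.symm),
      Finset.sum_eq_single_of_mem β hβ (fun β' hβ' hne => Finsupp.single_eq_of_ne'
        (fun hcol => hne (sigMap_inj φ hφ hA θ hcol))),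
      Finsupp.single_eq_same, zero_add] at h
    have hmem : sigMap φ hφ hA θ β ∈ B := by
      by_contra hnB
      rw [hwev, if_neg (hσ0ne β hβ), if_neg hnB] at h
      exact hμd β hβ h
    by_contra hne
    apply hp₀ (sigMap φ hφ hA θ β - β)
      (Finset.mem_image.mpr ⟨(sigMap φ hφ hA θ β, β), Finset.mem_filter.mpr
        ⟨Finset.mem_product.mpr ⟨Finset.mem_insert_of_mem hmem, Finset.mem_insert_of_mem hβ⟩,
          hne⟩, rfl⟩)
    rw [map_sub, hφσ β, sub_self]
  have hμB : ∀ β ∈ B, muMap φ hφ hA θ β (d β) = d β := by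
    intro β hβ
    have hβ0 : β ≠ 0 := fun h0 => hB0 (h0 ▸ hβ)
    have h := congrArg (fun u => toF φ u β) hθw2
    rw [toF_add, toF_sum, Finsupp.add_apply, Finsupp.finset_sum_apply] at h
    simp only [toF_tt] at h
    rw [Finsupp.single_eq_of_ne' (fun h0 => hβ0 h0.symm),
      Finset.sum_eq_single_of_mem β hβ (fun β' hβ' hne => by
        rw [hσB β' hβ']
        exact Finsupp.single_eq_of_ne' hne),
      hσB β hβ, Finsupp.single_eq_same, zero_add] at h
    rw [h, hwev, if_neg hβ0, if_pos hβ]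
  have hσS : ∀ α ∈ S, sigMap φ hφ hA θ α = α := by
    intro α hα
    by_cases h0 : α = 0
    · rw [h0]; exact sigMap_zero φ hφ hA θ
    · exact hσB α (hSB (Finset.mem_erase.mpr ⟨h0, hα⟩))
  have hμS : ∀ α ∈ S, ∀ v ∈ V, muMap φ hφ hA θ α v = v := by
    intro α hα v hv
    obtain ⟨γ, hγB, hγ'B, hdγ, hdγ', hφv⟩ := hgad α hα v hv
    have hμγ : muMap φ hφ hA θ γ v = v := by
      have h := hμB γ hγB
      rw [hdγ] at h
      exact h
    have hμγ' : muMap φ hφ hA θ (α - γ) v = v := by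
      have h := hμB _ hγ'B
      rw [hdγ'] at h
      exact h
    have hbr : ⁅tt φ γ v, tt φ (α - γ) v⁆ = φ v (α - γ - γ) • tt φ α v := by
      rw [bracket_tt]
      have h1 : γ + (α - γ) = α := by abel
      rw [h1, ← tt_smul]
      congr 1
      rw [show φ v (α - γ - γ) = φ v (α - γ) - φ v γ from map_sub (φ v) _ _, sub_smul]
    have hL : θ ⁅tt φ γ v, tt φ (α - γ) v⁆ = ⁅tt φ γ v, tt φ (α - γ) v⁆ := by
      rw [LieEquiv.map_lie, theta_tt_eq φ hφ hA θ γ v, theta_tt_eq φ hφ hA θ (α - γ) v,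
        hσB γ hγB, hσB _ hγ'B, hμγ, hμγ']
    have hR : θ (φ v (α - γ - γ) • tt φ α v) =
        φ v (α - γ - γ) • tt φ α (muMap φ hφ hA θ α v) := by
      rw [lieEquiv_map_smul, theta_tt_eq φ hφ hA θ α v, hσS α hα]
    have hEq : φ v (α - γ - γ) • tt φ α (muMap φ hφ hA θ α v) =
        φ v (α - γ - γ) • tt φ α v := by
      rw [← hR, ← hbr, hL, hbr]
    have h3 := congrArg (fun u => toF φ u α) hEq
    rw [toF_smul, toF_smul, toF_tt, toF_tt, Finsupp.smul_apply, Finsupp.smul_apply,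
      Finsupp.single_eq_same, Finsupp.single_eq_same] at h3
    have h4 := congrArg (fun t => (φ v (α - γ - γ))⁻¹ • t) h3
    rw [inv_smul_smul₀ hφv, inv_smul_smul₀ hφv] at h4
    exact h4
  have hfix : ∀ u : W F A T φ, (toF φ u).support ⊆ S →
      (∀ α ∈ (toF φ u).support, toF φ u α ∈ V) → θ u = u := by
    intro u hsupp hval
    calc θ u = θ (∑ α ∈ (toF φ u).support, tt φ α (toF φ u α)) := by
          rw [← tt_sum_support φ u]
      _ = ∑ α ∈ (toF φ u).support, θ (tt φ α (toF φ u α)) := lieEquiv_map_sum φ θ _ _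
      _ = ∑ α ∈ (toF φ u).support, tt φ α (toF φ u α) := by
          refine Finset.sum_congr rfl fun α hα => ?_
          rw [theta_tt_eq φ hφ hA θ α _, hσS α (hsupp hα), hμS α (hsupp hα) _ (hval α hα)]
      _ = u := (tt_sum_support φ u).symm
  refine ⟨?_, ?_, ?_⟩
  · exact hfix x (fun α hα => Finset.mem_union_left _ (Finset.mem_union_left _ hα))
      (fun α hα => Finset.mem_union_left _ (Finset.mem_union_left _
        (Finset.mem_image_of_mem _ hα)))
  · exact hfix y (fun α hα => Finset.mem_union_left _ (Finset.mem_union_right _ hα))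
      (fun α hα => Finset.mem_union_left _ (Finset.mem_union_right _
        (Finset.mem_image_of_mem _ hα)))
  · exact hfix z (fun α hα => Finset.mem_union_right _ hα)
      (fun α hα => Finset.mem_union_right _ (Finset.mem_image_of_mem _ hα))

end GW

/-- Theorem 3.2: every bijective `2`-local automorphism of a simple
generalized Witt algebra `W(A,T,φ)` over a field of characteristic `0` is an
automorphism. -/
theorem GW.bijective_twoLocalAut_is_aut
    {F : Type*} [Field F] [CharZero F]
    {A : Type*} [AddCommGroup A]
    {T : Type*} [AddCommGroup T] [Module F T]
    (φ : T →ₗ[F] (A →+ F))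
    (hA : Nontrivial A) (hφ : GW.Nondeg φ)
    (Φ : GW.W F A T φ → GW.W F A T φ) (hbij : Function.Bijective Φ)
    (h2loc : ∀ x y : GW.W F A T φ,
      ∃ θ : GW.W F A T φ ≃ₗ⁅F⁆ GW.W F A T φ, Φ x = θ x ∧ Φ y = θ y) :
    ∃ θ : GW.W F A T φ ≃ₗ⁅F⁆ GW.W F A T φ, ⇑θ = Φ := by
  classical
  have hadd : ∀ a b : GW.W F A T φ, Φ (a + b) = Φ a + Φ b := by
    intro a b
    obtain ⟨w, hw⟩ := GW.rigidity φ hφ hA a b (a + b)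
    obtain ⟨θ₁, hθ₁w, hθ₁a⟩ := h2loc w a
    obtain ⟨θ₂, hθ₂w, hθ₂b⟩ := h2loc w b
    obtain ⟨θ₃, hθ₃w, hθ₃s⟩ := h2loc w (a + b)
    have h31 : (θ₃.trans θ₁.symm) w = w := by
      have h : θ₃ w = θ₁ w := by rw [← hθ₃w, hθ₁w]
      show θ₁.symm (θ₃ w) = w
      rw [h, θ₁.symm_apply_apply]
    have h21 : (θ₂.trans θ₁.symm) w = w := by
      have h : θ₂ w = θ₁ w := by rw [← hθ₂w, hθ₁w]
      show θ₁.symm (θ₂ w) = w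
      rw [h, θ₁.symm_apply_apply]
    have h3s : θ₁.symm (θ₃ (a + b)) = a + b := (hw _ h31).2.2
    have h2b : θ₁.symm (θ₂ b) = b := (hw _ h21).2.1
    have e3 : θ₃ (a + b) = θ₁ (a + b) := by
      calc θ₃ (a + b) = θ₁ (θ₁.symm (θ₃ (a + b))) := (θ₁.apply_symm_apply _).symm
        _ = θ₁ (a + b) := by rw [h3s]
    have e2 : θ₂ b = θ₁ b := by
      calc θ₂ b = θ₁ (θ₁.symm (θ₂ b)) := (θ₁.apply_symm_apply _).symm
        _ = θ₁ b := by rw [h2b]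
    rw [hθ₃s, e3, GW.lieEquiv_map_add φ θ₁, ← hθ₁a, ← e2, ← hθ₂b]
  have hsmul : ∀ (c : F) (a : GW.W F A T φ), Φ (c • a) = c • Φ a := by
    intro c a
    obtain ⟨θ, hθa, hθc⟩ := h2loc a (c • a)
    rw [hθc, GW.lieEquiv_map_smul φ θ, ← hθa]
  have hlie : ∀ a b : GW.W F A T φ, Φ ⁅a, b⁆ = ⁅Φ a, Φ b⁆ := by
    intro a b
    obtain ⟨w, hw⟩ := GW.rigidity φ hφ hA a b ⁅a, b⁆
    obtain ⟨θ₁, hθ₁w, hθ₁a⟩ := h2loc w a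
    obtain ⟨θ₂, hθ₂w, hθ₂b⟩ := h2loc w b
    obtain ⟨θ₃, hθ₃w, hθ₃s⟩ := h2loc w ⁅a, b⁆
    have h31 : (θ₃.trans θ₁.symm) w = w := by
      have h : θ₃ w = θ₁ w := by rw [← hθ₃w, hθ₁w]
      show θ₁.symm (θ₃ w) = w
      rw [h, θ₁.symm_apply_apply]
    have h21 : (θ₂.trans θ₁.symm) w = w := by
      have h : θ₂ w = θ₁ w := by rw [← hθ₂w, hθ₁w]
      show θ₁.symm (θ₂ w) = w
      rw [h, θ₁.symm_apply_apply]
    have h3s : θ₁.symm (θ₃ ⁅a, b⁆) = ⁅a, b⁆ := (hw _ h31).2.2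
    have h2b : θ₁.symm (θ₂ b) = b := (hw _ h21).2.1
    have e3 : θ₃ ⁅a, b⁆ = θ₁ ⁅a, b⁆ := by
      calc θ₃ ⁅a, b⁆ = θ₁ (θ₁.symm (θ₃ ⁅a, b⁆)) := (θ₁.apply_symm_apply _).symm
        _ = θ₁ ⁅a, b⁆ := by rw [h3s]
    have e2 : θ₂ b = θ₁ b := by
      calc θ₂ b = θ₁ (θ₁.symm (θ₂ b)) := (θ₁.apply_symm_apply _).symm
        _ = θ₁ b := by rw [h2b]
    rw [hθ₃s, e3, LieEquiv.map_lie, ← hθ₁a, ← e2, ← hθ₂b]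
  set lin : GW.W F A T φ →ₗ[F] GW.W F A T φ :=
    { toFun := Φ, map_add' := hadd, map_smul' := fun c a => hsmul c a } with hlin
  set e : GW.W F A T φ ≃ₗ[F] GW.W F A T φ := LinearEquiv.ofBijective lin hbij with he
  exact ⟨{ toLieHom := { lin with map_lie' := fun {a b} => hlie a b },
           invFun := e.invFun, left_inv := e.left_inv, right_inv := e.right_inv }, rfl⟩
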